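/- Let W(λ) = λ|Ψ⁻⟩⟨Ψ⁻| + (1−λ)(I⊗I)/4 be the Werner state (0 ≤ λ ≤ 1). The minimum measurement strength ε needed so that, after the measurement M₊(ε,n̂) with n̂ in the xz-plane, the CNOT-evolved system dynamics can be generated from a product state with a valid environment Bloch vector (|ζ⃗| ≤ 1), subject to ζ_x = −[√(1−ε²)/n_x + (1−√(1−ε²)) n_x]·(λ/ε), is ε_min(λ) = λ for λ ∈ [0, √3/2] and ε_min(λ) = 2λ√(4λ²−2)/(4λ²−1) for λ ∈ [√3/2, 1]. -/

import Mathlib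

set_option maxHeartbeats 1000000


noncomputable section

/-- Feasibility of measurement strength ε for the Werner state W(λ) under CNOT:
there exist n_x ∈ [−1,1]\{0} and ζ_x with |ζ_x| ≤ 1 satisfying
ζ_x = −[√(1−ε²)/n_x + (1−√(1−ε²)) n_x]·(λ/ε) (written in cleared form). -/
def wernerFeasible (lam ε : ℝ) : Prop :=
  0 ≤ ε ∧ ε ≤ 1 ∧
    ∃ nx ζx : ℝ, nx ∈ Set.Icc (-1 : ℝ) 1 ∧ nx ≠ 0 ∧ |ζx| ≤ 1 ∧
      ε * ζx * nx = -(Real.sqrt (1 - ε ^ 2) + (1 - Real.sqrt (1 - ε ^ 2)) * nx ^ 2) * lam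

/-- The claimed minimal measurement strength for W(λ). -/
def wernerEpsMin (lam : ℝ) : ℝ :=
  if lam ≤ Real.sqrt 3 / 2 then lam
  else 2 * lam * Real.sqrt (4 * lam ^ 2 - 2) / (4 * lam ^ 2 - 1)

/-- the minimum ε making the Werner state dynamics U-generable by
a product state is λ on [0,√3/2] and 2λ√(4λ²−2)/(4λ²−1) on [√3/2,1]. -/
theorem werner_min_strength (lam : ℝ) (h0 : 0 ≤ lam) (h1 : lam ≤ 1) :
    IsLeast {ε : ℝ | wernerFeasible lam ε} (wernerEpsMin lam) := by
  have h3 : (0:ℝ) ≤ 3 := by norm_num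
  have h32 : (Real.sqrt 3 / 2) ^ 2 = 3 / 4 := by
    rw [div_pow, Real.sq_sqrt h3]; norm_num
  have h32nn : (0:ℝ) ≤ Real.sqrt 3 / 2 := by positivity
  constructor
  · -- membership
    show wernerFeasible lam (wernerEpsMin lam)
    unfold wernerEpsMin
    split_ifs with hc
    · refine ⟨h0, h1, 1, -1, ⟨by norm_num, le_refl 1⟩, one_ne_zero, by norm_num, ?_⟩
      ring
    · -- lam > √3/2 case
      push_neg at hc
      have hl2 : 3 / 4 < lam ^ 2 := by
        have := hc
        nlinarith [h32, h32nn]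
      have hB : (1:ℝ) < 4 * lam ^ 2 - 2 := by nlinarith
      have hA : (2:ℝ) < 4 * lam ^ 2 - 1 := by nlinarith
      have hA0 : (0:ℝ) < 4 * lam ^ 2 - 1 := by linarith
      set r := Real.sqrt (4 * lam ^ 2 - 2) with hrdef
      have hr2 : r ^ 2 = 4 * lam ^ 2 - 2 := Real.sq_sqrt (by linarith)
      have hr1 : 1 ≤ r := by
        rw [hrdef]
        rw [show (1:ℝ) = Real.sqrt 1 by simp]
        exact Real.sqrt_le_sqrt (by linarith)
      have hr0 : 0 < r := by linarith
      have hlpos : 0 < lam := by nlinarith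
      set ε := 2 * lam * r / (4 * lam ^ 2 - 1) with hεdef
      have hε0 : 0 ≤ ε := by positivity
      have hε1 : ε ≤ 1 := by
        rw [hεdef, div_le_one hA0]
        nlinarith [sq_nonneg (2 * lam * r - (4 * lam ^ 2 - 1))]
      have hs : 1 - ε ^ 2 = ((4 * lam ^ 2 - 1)⁻¹) ^ 2 := by
        rw [hεdef]
        have hAne : 4 * lam ^ 2 - 1 ≠ 0 := ne_of_gt hA0
        have hD : (4 * lam ^ 2 - 1) ^ 2 ≠ 0 := pow_ne_zero _ hAne
        rw [inv_pow]
        apply eq_inv_of_mul_eq_one_left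
        rw [sub_mul, div_pow, div_mul_cancel₀ _ hD, mul_pow, mul_pow, hr2]
        ring
      refine ⟨hε0, hε1, r⁻¹, -1,
        ⟨le_trans (by norm_num) (le_of_lt (inv_pos.mpr hr0)), inv_le_one_of_one_le₀ hr1⟩,
        by positivity, by norm_num, ?_⟩
      rw [hs, Real.sqrt_sq (by positivity)]
      rw [hεdef]
      have hrne : r ≠ 0 := ne_of_gt hr0
      have hAne : 4 * lam ^ 2 - 1 ≠ 0 := ne_of_gt hA0
      have e1 : (4 * lam ^ 2 - 1) * (4 * lam ^ 2 - 1)⁻¹ = 1 := mul_inv_cancel₀ hAne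
      have e2 : r * r⁻¹ = 1 := mul_inv_cancel₀ hrne
      linear_combination (-2 * lam * (4 * lam ^ 2 - 1)⁻¹ + lam * (4 * lam ^ 2 - 1)⁻¹ * (r * r⁻¹ + 1)) * e2
        + (-lam * (r⁻¹) ^ 2) * e1 + (-lam * (4 * lam ^ 2 - 1)⁻¹ * (r⁻¹) ^ 2) * hr2
  · -- lower bound
    rintro ε ⟨hε0, hε1, nx, ζx, ⟨hn1, hn2⟩, hnne, hζ, heq⟩
    set s := Real.sqrt (1 - ε ^ 2) with hsdef
    have hs0 : 0 ≤ s := Real.sqrt_nonneg _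
    have hs2 : s ^ 2 = 1 - ε ^ 2 := Real.sq_sqrt (by nlinarith)
    clear_value s
    clear hsdef
    have hs1 : s ≤ 1 := by nlinarith [sq_nonneg ε]
    have hm0 : 0 < |nx| := abs_pos.mpr hnne
    have hm1 : |nx| ≤ 1 := abs_le.mpr ⟨hn1, hn2⟩
    have hmsq : |nx| ^ 2 = nx ^ 2 := sq_abs nx
    have hX : 0 ≤ s + (1 - s) * nx ^ 2 := by nlinarith [sq_nonneg nx]
    have key : (s + (1 - s) * nx ^ 2) * lam ≤ ε * |nx| := by
      have h2 : |ε * ζx * nx| ≤ ε * |nx| := by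
        rw [abs_mul, abs_mul, abs_of_nonneg hε0]
        have h3' : ε * |ζx| ≤ ε * 1 := mul_le_mul_of_nonneg_left hζ hε0
        nlinarith [abs_nonneg nx]
      have h1' : |ε * ζx * nx| = (s + (1 - s) * nx ^ 2) * lam := by
        rw [heq, abs_of_nonpos (by nlinarith)]
        ring
      linarith [h1' ▸ h2]
    show wernerEpsMin lam ≤ ε
    unfold wernerEpsMin
    split_ifs with hc
    · -- show lam ≤ ε
      by_cases hhs : 1 / 2 ≤ s
      · have hgef : |nx| ≤ s + (1 - s) * nx ^ 2 := by
          nlinarith [sq_nonneg (1 - |nx|), hmsq]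
        have : lam * |nx| ≤ ε * |nx| := by nlinarith
        exact le_of_mul_le_mul_right (by linarith) hm0
      · push_neg at hhs
        have hl2 : lam ^ 2 ≤ 3 / 4 := by nlinarith [h32, h32nn]
        nlinarith [sq_nonneg (ε - lam), sq_nonneg (ε + lam)]
    · -- lam > √3/2
      push_neg at hc
      have hl2 : 3 / 4 < lam ^ 2 := by nlinarith [h32, h32nn]
      have hlpos : 0 < lam := by nlinarith
      have hA0 : (0:ℝ) < 4 * lam ^ 2 - 1 := by nlinarith
      set r := Real.sqrt (4 * lam ^ 2 - 2) with hrdef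
      have hr2 : r ^ 2 = 4 * lam ^ 2 - 2 := Real.sq_sqrt (by nlinarith)
      have hr0 : 0 ≤ r := Real.sqrt_nonneg _
      rw [show 2 * lam * Real.sqrt (4 * lam ^ 2 - 2) / (4 * lam ^ 2 - 1) = 2 * lam * r / (4 * lam ^ 2 - 1) from rfl]
      clear_value r
      clear hrdef
      -- ε > 0
      have hεpos : 0 < ε := by
        rcases lt_or_eq_of_le hε0 with h | h
        · exact h
        · exfalso
          have hs1' : s = 1 := by
            have : s ^ 2 = 1 := by rw [hs2, ← h]; ring
            nlinarith
          rw [← h, hs1'] at heq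
          nlinarith [heq]
      have hslt1 : s < 1 := by nlinarith
      -- AM-GM
      have hu2 : (Real.sqrt s) ^ 2 = s := Real.sq_sqrt hs0
      have hv2 : (Real.sqrt (1 - s)) ^ 2 = 1 - s := Real.sq_sqrt (by linarith)
      have hu0 : 0 ≤ Real.sqrt s := Real.sqrt_nonneg _
      have hv0 : 0 ≤ Real.sqrt (1 - s) := Real.sqrt_nonneg _
      have hamgm : 2 * Real.sqrt s * Real.sqrt (1 - s) * |nx| ≤ s + (1 - s) * nx ^ 2 := by
        nlinarith [sq_nonneg (Real.sqrt s - Real.sqrt (1 - s) * |nx|), hmsq]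
      have hε2 : 2 * lam * (Real.sqrt s * Real.sqrt (1 - s)) ≤ ε := by
        have : (2 * lam * (Real.sqrt s * Real.sqrt (1 - s))) * |nx| ≤ ε * |nx| := by
          nlinarith
        exact le_of_mul_le_mul_right this hm0
      have hsq : 4 * lam ^ 2 * (s * (1 - s)) ≤ ε ^ 2 := by
        have hw : (Real.sqrt s * Real.sqrt (1 - s)) ^ 2 = s * (1 - s) := by
          rw [mul_pow, hu2, hv2]
        nlinarith [mul_le_mul hε2 hε2 (by positivity) hεpos.le, hw, sq_nonneg lam]
      clear heq hζ key hX hmsq hm1 hm0 hamgm hε2 hu2 hv2 hu0 hv0 hn1 hn2 hnne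
      -- so ((4λ²-1)s - 1)(s-1) ≥ 0, giving s ≤ 1/(4λ²-1)
      have h5 : 0 < 1 - s := by linarith
      have h6 : 0 ≤ (1 - s) * (1 + s - 4 * lam ^ 2 * s) := by
        have key6 : (1 - s) * (1 + s - 4 * lam ^ 2 * s)
            = ε ^ 2 - 4 * lam ^ 2 * (s * (1 - s)) - (ε ^ 2 - 1 + s ^ 2) := by ring
        rw [key6, hs2]; ring_nf; linarith [hsq]
      have h7 : 0 ≤ 1 + s - 4 * lam ^ 2 * s := by nlinarith [h6, h5]
      have hsle : s * (4 * lam ^ 2 - 1) ≤ 1 := by nlinarith [h7]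
      -- conclude
      rw [div_le_iff₀ hA0]
      have h8 : s ^ 2 * (4 * lam ^ 2 - 1) ^ 2 ≤ 1 := by
        nlinarith [hsle, mul_nonneg hs0 hA0.le]
      have hL : (2 * lam * r) ^ 2 = (4 * lam ^ 2 - 1) ^ 2 - 1 := by
        linear_combination (4 * lam ^ 2) * hr2
      have hR : (ε * (4 * lam ^ 2 - 1)) ^ 2 = (1 - s ^ 2) * (4 * lam ^ 2 - 1) ^ 2 := by
        linear_combination (4 * lam ^ 2 - 1) ^ 2 * hs2
      have h1e : (2 * lam * r) ^ 2 ≤ (ε * (4 * lam ^ 2 - 1)) ^ 2 := by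
        rw [hL, hR]; linarith [h8]
      exact le_of_pow_le_pow_left₀ two_ne_zero (mul_nonneg hε0 hA0.le) h1e
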